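/- Key step in the invariant-subspace comparison: if A is compact on E, A' its restriction to a dense subspace E' invariant under A, λ ≠ 0, and x ∈ ker(A − λ·id)^n, then x ∈ E'. (Hence ker((A − λ)^n) ⊆ ker((A' − λ)^n).) -/

import Mathlib

open Filter Metric Topology

section RieszTheory

variable {X : Type*} [NormedAddCommGroup X] [NormedSpace ℂ X]

theorem riesz_sep {F : Submodule ℂ X} (hF : IsClosed (F : Set X)) {x : X} (hx : x ∉ F) :
    ∃ u : X, ‖u‖ ≤ 1 ∧ (∃ c : ℂ, u - c • x ∈ F) ∧ ∀ z ∈ F, 1 / 2 ≤ ‖u - z‖ := by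
  have hne : (F : Set X).Nonempty := ⟨0, F.zero_mem⟩
  set d := infDist x (F : Set X) with hd
  have hd0 : 0 < d := by
    rcases lt_or_eq_of_le (infDist_nonneg (s := (F : Set X)) (x := x)) with h | h
    · exact h
    · exact absurd (((hF.mem_iff_infDist_zero hne).2 h.symm)) hx
  obtain ⟨z₀, hz₀F, hz₀⟩ : ∃ z₀ ∈ (F : Set X), dist x z₀ < 2 * d := by
    have := (infDist_lt_iff hne (x := x) (r := 2 * d)).1 (by linarith)
    simpa using this
  have hxz : x - z₀ ≠ 0 := by
    intro h
    exact hx (by simpa [sub_eq_zero.1 h] using hz₀F)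
  have hnorm : 0 < ‖x - z₀‖ := norm_pos_iff.2 hxz
  have hcne : (‖x - z₀‖ : ℂ) ≠ 0 := by exact_mod_cast hnorm.ne'
  refine ⟨(‖x - z₀‖ : ℂ)⁻¹ • (x - z₀), ?_, ⟨(‖x - z₀‖ : ℂ)⁻¹, ?_⟩, ?_⟩
  · rw [norm_smul]
    have : ‖((‖x - z₀‖ : ℂ))⁻¹‖ = ‖x - z₀‖⁻¹ := by simp [norm_inv]
    rw [this, inv_mul_cancel₀ hnorm.ne']
  · have : (‖x - z₀‖ : ℂ)⁻¹ • (x - z₀) - (‖x - z₀‖ : ℂ)⁻¹ • x = -((‖x - z₀‖ : ℂ)⁻¹ • z₀) := by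
      rw [← smul_sub]; simp
    rw [this]
    exact F.neg_mem (F.smul_mem _ hz₀F)
  · intro z hz
    have key : ∀ w ∈ F, d ≤ ‖x - w‖ := fun w hw => by
      simpa [dist_eq_norm] using infDist_le_dist_of_mem (x := x) hw
    have h1 : (‖x - z₀‖ : ℂ)⁻¹ • (x - z₀) - z
        = (‖x - z₀‖ : ℂ)⁻¹ • (x - (z₀ + (‖x - z₀‖ : ℂ) • z)) := by
      simp only [smul_sub, smul_add, smul_smul, inv_mul_cancel₀ hcne, one_smul]
      abel
    have hmem : z₀ + (‖x - z₀‖ : ℂ) • z ∈ F := F.add_mem hz₀F (F.smul_mem _ hz)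
    have h2 : d ≤ ‖x - (z₀ + (‖x - z₀‖ : ℂ) • z)‖ := key _ hmem
    rw [h1, norm_smul]
    have h3 : ‖((‖x - z₀‖ : ℂ))⁻¹‖ = ‖x - z₀‖⁻¹ := by simp [norm_inv]
    rw [h3]
    have h4 : ‖x - z₀‖ < 2 * d := by simpa [dist_eq_norm] using hz₀
    have h5 : ‖x - z₀‖⁻¹ * d ≤ ‖x - z₀‖⁻¹ * ‖x - (z₀ + (‖x - z₀‖ : ℂ) • z)‖ :=
      mul_le_mul_of_nonneg_left h2 (by positivity)
    refine le_trans ?_ h5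
    have h6 := mul_lt_mul_of_pos_left h4 (inv_pos.2 hnorm)
    rw [inv_mul_cancel₀ hnorm.ne'] at h6
    nlinarith [inv_pos.2 hnorm]

theorem compact_subseq (K : X →L[ℂ] X) (hK : IsCompactOperator K) (u : ℕ → X)
    (hu : ∀ j, ‖u j‖ ≤ 1) :
    ∃ φ : ℕ → ℕ, StrictMono φ ∧ ∃ v, Tendsto (fun j => K (u (φ j))) atTop (𝓝 v) := by
  have hc := hK.isCompact_closure_image_closedBall (𝕜₁ := ℂ) 1
  have hmem : ∀ j, K (u j) ∈ closure (K '' closedBall 0 1) := fun j =>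
    subset_closure ⟨u j, by simpa [mem_closedBall, dist_eq_norm] using hu j, rfl⟩
  obtain ⟨v, -, φ, hφ, hconv⟩ := hc.tendsto_subseq hmem
  exact ⟨φ, hφ, v, hconv⟩

theorem sep_contra (K : X →L[ℂ] X) (hK : IsCompactOperator K) (u : ℕ → X)
    (hu : ∀ p, ‖u p‖ ≤ 1)
    (hs : ∀ p q, p < q → 1 / 2 ≤ ‖K (u p) - K (u q)‖) : False := by
  obtain ⟨φ, hφ, v, hconv⟩ := compact_subseq K hK u hu
  have hcauchy := hconv.cauchySeq
  rw [Metric.cauchySeq_iff] at hcauchy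
  obtain ⟨N, hN⟩ := hcauchy (1 / 2) (by norm_num)
  have h := hN N (le_refl N) (N + 1) (by omega)
  rw [dist_eq_norm] at h
  exact absurd h (not_lt.2 (hs _ _ (hφ (Nat.lt_succ_self N))))

theorem ker_findim (K : X →L[ℂ] X) (hK : IsCompactOperator K) :
    FiniteDimensional ℂ (LinearMap.ker (1 - K : X →L[ℂ] X).toLinearMap) := by
  set S : X →L[ℂ] X := 1 - K with hS
  set N := LinearMap.ker S.toLinearMap with hN
  have hfix : ∀ y ∈ N, K y = y := by
    intro y hy
    have h0 : S y = 0 := hy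
    have : y - K y = 0 := by
      simpa [hS, ContinuousLinearMap.sub_apply] using h0
    exact (sub_eq_zero.1 this).symm
  have hNclosed : IsClosed (N : Set X) := ContinuousLinearMap.isClosed_ker S
  have hC : IsCompact ((N : Set X) ∩ closedBall 0 1) := by
    refine IsCompact.of_isClosed_subset (hK.isCompact_closure_image_closedBall (𝕜₁ := ℂ) 1)
      (hNclosed.inter Metric.isClosed_closedBall) ?_
    rintro x ⟨hxN, hxB⟩
    exact subset_closure ⟨x, hxB, hfix x hxN⟩
  have hB : IsCompact (closedBall (0 : ↥N) 1) := by
    rw [Topology.IsEmbedding.subtypeVal.isCompact_iff]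
    have : ((↑) : ↥N → X) '' closedBall 0 1 = (N : Set X) ∩ closedBall 0 1 := by
      ext x
      constructor
      · rintro ⟨⟨y, hy⟩, hball, rfl⟩
        exact ⟨hy, by simpa [mem_closedBall, dist_eq_norm] using hball⟩
      · rintro ⟨hxN, hxB⟩
        exact ⟨⟨x, hxN⟩, by simpa [mem_closedBall, dist_eq_norm,
          Submodule.coe_norm] using hxB, rfl⟩
    rw [this]
    exact hC
  exact FiniteDimensional.of_isCompact_closedBall₀ ℂ zero_lt_one hB

theorem range_closed (K : X →L[ℂ] X) (hK : IsCompactOperator K) :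
    IsClosed ((LinearMap.range (1 - K : X →L[ℂ] X).toLinearMap) : Set X) := by
  set S : X →L[ℂ] X := 1 - K with hSdef
  have hSapp : ∀ z, S z = z - K z := fun z => by
    simp [hSdef, ContinuousLinearMap.sub_apply]
  rw [← isSeqClosed_iff_isClosed]
  intro y y₀ hy hlim
  set N := LinearMap.ker S.toLinearMap with hN
  have hNne : (N : Set X).Nonempty := ⟨0, N.zero_mem⟩
  choose x hx using fun j => LinearMap.mem_range.1 (hy j)
  set d : ℕ → ℝ := fun j => infDist (x j) (N : Set X) with hd
  have hdlt : ∀ j, d j < d j + 1 := fun j => lt_add_one _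
  choose k hkN hkd using fun j => (infDist_lt_iff hNne).1 (hdlt j)
  set x' : ℕ → X := fun j => x j - k j with hx'
  have hSx' : ∀ j, S (x' j) = y j := by
    intro j
    have : S (k j) = 0 := hkN j
    have hxj : S (x j) = y j := hx j
    simp [hx', map_sub, this, hxj]
  have hx'norm : ∀ j, ‖x' j‖ ≤ d j + 1 := fun j => by
    have := (hkd j).le
    rwa [dist_eq_norm] at this
  have hlow : ∀ j, ∀ w ∈ N, d j ≤ ‖x' j - w‖ := by
    intro j w hw
    have h1 : k j + w ∈ (N : Set X) := N.add_mem (hkN j) hw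
    have h2 : d j ≤ dist (x j) (k j + w) := infDist_le_dist_of_mem h1
    rwa [dist_eq_norm, show x j - (k j + w) = x' j - w by rw [hx', sub_add_eq_sub_sub]] at h2
  by_cases hbdd : ∃ C, ∃ᶠ j in atTop, ‖x' j‖ ≤ C
  · -- bounded case : extract convergent subsequence, get limit in range
    obtain ⟨C, hC⟩ := hbdd
    obtain ⟨φ, hφ, hφC⟩ := Filter.extraction_of_frequently_atTop hC
    have hCpos : 0 < C + 1 := by
      have := (norm_nonneg (x' (φ 0))).trans (hφC 0); linarith
    set u : ℕ → X := fun j => ((C + 1 : ℝ) : ℂ)⁻¹ • x' (φ j) with hu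
    have hunorm : ∀ j, ‖u j‖ ≤ 1 := by
      intro j
      rw [hu]
      simp only [norm_smul, norm_inv, Complex.norm_real, Real.norm_eq_abs,
        abs_of_pos hCpos]
      rw [inv_mul_le_iff₀ hCpos, mul_one]
      linarith [hφC j]
    obtain ⟨ψ, hψ, v, hv⟩ := compact_subseq K hK u hunorm
    -- x' (φ (ψ j)) converges
    have hyconv : Tendsto (fun j => y (φ (ψ j))) atTop (𝓝 y₀) :=
      hlim.comp ((hφ.comp hψ).tendsto_atTop)
    have hKx' : Tendsto (fun j => K (x' (φ (ψ j)))) atTop (𝓝 (((C + 1 : ℝ) : ℂ) • v)) := by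
      have : ∀ j, K (x' (φ (ψ j))) = ((C + 1 : ℝ) : ℂ) • K (u (ψ j)) := by
        intro j
        rw [hu]
        rw [map_smul, smul_smul, mul_inv_cancel₀ (by exact_mod_cast hCpos.ne'), one_smul]
      simp only [this]
      exact hv.const_smul _
    have hx'conv : Tendsto (fun j => x' (φ (ψ j))) atTop (𝓝 (y₀ + ((C + 1 : ℝ) : ℂ) • v)) := by
      have heq : ∀ j, x' (φ (ψ j)) = y (φ (ψ j)) + K (x' (φ (ψ j))) := by
        intro j
        have h := hSx' (φ (ψ j))
        rw [hSapp] at h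
        exact sub_eq_iff_eq_add.1 h
      exact (hyconv.add hKx').congr (fun j => (heq j).symm)
    refine LinearMap.mem_range.2 ⟨y₀ + ((C + 1 : ℝ) : ℂ) • v, ?_⟩
    have h1 : Tendsto (fun j => S (x' (φ (ψ j)))) atTop (𝓝 (S (y₀ + ((C + 1 : ℝ) : ℂ) • v))) :=
      (S.continuous.tendsto _).comp hx'conv
    have h2 : Tendsto (fun j => S (x' (φ (ψ j)))) atTop (𝓝 y₀) :=
      hyconv.congr (fun j => (hSx' _).symm)
    exact tendsto_nhds_unique h1 h2
  · -- unbounded case: derive a contradiction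
    push_neg at hbdd
    have htop : Tendsto (fun j => ‖x' j‖) atTop atTop := by
      rw [Filter.tendsto_atTop]
      intro C
      exact (hbdd C).mono fun j hj => hj.le
    -- normalized sequence
    set u : ℕ → X := fun j => ((‖x' j‖ : ℝ) : ℂ)⁻¹ • x' j with hu
    have hunorm : ∀ j, ‖u j‖ ≤ 1 := by
      intro j
      rw [hu]
      simp only [norm_smul, norm_inv, Complex.norm_real, Real.norm_eq_abs,
        abs_norm]
      rcases eq_or_ne (‖x' j‖) 0 with h | h
      · simp [h]
      · rw [inv_mul_cancel₀ h]
    obtain ⟨ψ, hψ, v, hv⟩ := compact_subseq K hK u hunorm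
    -- S (u j) → 0
    have hSu : Tendsto (fun j => S (u j)) atTop (𝓝 0) := by
      have hSueq : ∀ j, S (u j) = ((‖x' j‖ : ℝ) : ℂ)⁻¹ • y j := by
        intro j
        rw [hu, map_smul, hSx']
      have hbound : Tendsto (fun j => ‖x' j‖⁻¹ * ‖y j‖) atTop (𝓝 0) := by
        have h1 : Tendsto (fun j => ‖x' j‖⁻¹) atTop (𝓝 0) :=
          tendsto_inv_atTop_zero.comp htop
        have h2 : Tendsto (fun j => ‖y j‖) atTop (𝓝 ‖y₀‖) := hlim.norm
        simpa using h1.mul h2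
      rw [tendsto_zero_iff_norm_tendsto_zero]
      refine squeeze_zero (fun j => norm_nonneg _) (fun j => ?_) hbound
      rw [hSueq, norm_smul, norm_inv, Complex.norm_real, Real.norm_eq_abs, abs_norm]
    -- u (ψ j) → v
    have huconv : Tendsto (fun j => u (ψ j)) atTop (𝓝 v) := by
      have heq : ∀ j, u (ψ j) = S (u (ψ j)) + K (u (ψ j)) := by
        intro j
        rw [hSapp]
        abel
      have h0 : Tendsto (fun j => S (u (ψ j))) atTop (𝓝 0) :=
        hSu.comp hψ.tendsto_atTop
      have := h0.add hv
      rw [zero_add] at this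
      exact this.congr fun j => (heq j).symm
    -- v ∈ N
    have hvN : v ∈ N := by
      have h1 : Tendsto (fun j => S (u (ψ j))) atTop (𝓝 (S v)) :=
        (S.continuous.tendsto _).comp huconv
      have h0 : Tendsto (fun j => S (u (ψ j))) atTop (𝓝 0) :=
        hSu.comp hψ.tendsto_atTop
      exact LinearMap.mem_ker.2 (tendsto_nhds_unique h1 h0)
    -- separation : eventually dist (u j) v ≥ 1/2
    have hsep : ∀ᶠ j in atTop, (1:ℝ)/2 ≤ ‖u j - v‖ := by
      filter_upwards [htop.eventually_ge_atTop 2] with j hj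
      have hjpos : (0:ℝ) < ‖x' j‖ := by linarith
      have hne : ((‖x' j‖ : ℝ) : ℂ) ≠ 0 := by exact_mod_cast hjpos.ne'
      have hmem : ((‖x' j‖ : ℝ) : ℂ) • v ∈ N := N.smul_mem _ hvN
      have h1 : d j ≤ ‖x' j - ((‖x' j‖ : ℝ) : ℂ) • v‖ := hlow j _ hmem
      have h2 : u j - v = ((‖x' j‖ : ℝ) : ℂ)⁻¹ • (x' j - ((‖x' j‖ : ℝ) : ℂ) • v) := by
        rw [hu]
        simp only [smul_sub, smul_smul, inv_mul_cancel₀ hne, one_smul]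
      rw [h2, norm_smul, norm_inv, Complex.norm_real, Real.norm_eq_abs, abs_norm]
      have hd2 : ‖x' j‖ - 1 ≤ d j := by linarith [hx'norm j]
      have h3 : ‖x' j‖⁻¹ * (‖x' j‖ - 1) ≤ ‖x' j‖⁻¹ * ‖x' j - ((‖x' j‖ : ℝ) : ℂ) • v‖ :=
        mul_le_mul_of_nonneg_left (le_trans hd2 h1) (by positivity)
      refine le_trans ?_ h3
      rw [mul_sub, inv_mul_cancel₀ hjpos.ne', mul_one]
      have h4 : ‖x' j‖⁻¹ ≤ 1/2 := by
        rw [inv_le_comm₀ hjpos (by norm_num)]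
        linarith
      linarith
    -- contradiction with u (ψ j) → v
    have hlt : ∀ᶠ j in atTop, ‖u (ψ j) - v‖ < 1/2 := by
      have := huconv
      rw [Metric.tendsto_atTop] at this
      obtain ⟨Nn, hNn⟩ := this (1/2) (by norm_num)
      filter_upwards [Filter.eventually_ge_atTop Nn] with j hj
      simpa [dist_eq_norm] using hNn j hj
    have hsep' : ∀ᶠ j in atTop, (1:ℝ)/2 ≤ ‖u (ψ j) - v‖ :=
      hψ.tendsto_atTop.eventually hsep
    obtain ⟨j, h1, h2⟩ := (hlt.and hsep').exists
    exfalso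
    linarith

theorem pow_one_sub (K : X →L[ℂ] X) (hK : IsCompactOperator K) (m : ℕ) :
    ∃ C : X →L[ℂ] X, IsCompactOperator C ∧ (1 - K) ^ m = 1 - C := by
  induction m with
  | zero => exact ⟨0, isCompactOperator_zero, by simp⟩
  | succ m ih =>
    obtain ⟨C, hC, hCeq⟩ := ih
    refine ⟨K + C - C * K, ?_, ?_⟩
    · have heq : ⇑(K + C - C * K) = (⇑K + ⇑C) - (⇑C ∘ ⇑K) := by
        funext z
        simp [ContinuousLinearMap.mul_apply]
      rw [heq]
      exact (hK.add hC).sub (hC.comp_clm K)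
    · rw [pow_succ, hCeq]
      noncomm_ring

theorem ker_pow_mono (S : X →L[ℂ] X) {a b : ℕ} (hab : a ≤ b) :
    LinearMap.ker (S ^ a).toLinearMap ≤ LinearMap.ker (S ^ b).toLinearMap := by
  intro z hz
  obtain ⟨t, rfl⟩ := Nat.exists_eq_add_of_le hab
  simp only [LinearMap.mem_ker, ContinuousLinearMap.coe_coe] at hz ⊢
  rw [show a + t = t + a by ring, pow_add, ContinuousLinearMap.mul_apply, hz, map_zero]

theorem range_pow_anti (S : X →L[ℂ] X) {a b : ℕ} (hab : a ≤ b) :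
    LinearMap.range (S ^ b).toLinearMap ≤ LinearMap.range (S ^ a).toLinearMap := by
  rintro z ⟨w, rfl⟩
  obtain ⟨t, rfl⟩ := Nat.exists_eq_add_of_le hab
  exact ⟨(S ^ t) w, by simp only [ContinuousLinearMap.coe_coe]; rw [← ContinuousLinearMap.mul_apply, ← pow_add]⟩

theorem ker_pow_stab (S : X →L[ℂ] X) (p : ℕ)
    (h : LinearMap.ker (S ^ (p + 1)).toLinearMap = LinearMap.ker (S ^ p).toLinearMap) :
    ∀ m, LinearMap.ker (S ^ (p + m)).toLinearMap = LinearMap.ker (S ^ p).toLinearMap := by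
  intro m
  induction m with
  | zero => rfl
  | succ m ih =>
    have e1 : ∀ z : X, (S ^ (p + (m + 1))) z = (S ^ (p + 1)) ((S ^ m) z) := by
      intro z
      rw [show p + (m + 1) = (p + 1) + m by ring, pow_add, ContinuousLinearMap.mul_apply]
    have e2 : ∀ z : X, (S ^ (p + m)) z = (S ^ p) ((S ^ m) z) := by
      intro z
      rw [pow_add, ContinuousLinearMap.mul_apply]
    ext z
    constructor
    · intro hz
      have h1 : (S ^ m) z ∈ LinearMap.ker (S ^ (p + 1)).toLinearMap := by
        rw [LinearMap.mem_ker, ContinuousLinearMap.coe_coe, ← e1]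
        exact hz
      rw [h] at h1
      rw [← ih]
      rw [LinearMap.mem_ker, ContinuousLinearMap.coe_coe, e2]
      exact h1
    · intro hz
      exact ker_pow_mono S (by omega) hz
  
theorem range_pow_stab (S : X →L[ℂ] X) (p : ℕ)
    (h : LinearMap.range (S ^ (p + 1)).toLinearMap = LinearMap.range (S ^ p).toLinearMap) :
    ∀ m, LinearMap.range (S ^ (p + m)).toLinearMap = LinearMap.range (S ^ p).toLinearMap := by
  intro m
  induction m with
  | zero => rfl
  | succ m ih =>
    refine le_antisymm (range_pow_anti S (by omega)) ?_
    rw [← ih]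
    rintro z ⟨w, rfl⟩
    have e3 : (S ^ (p + m)) w = (S ^ m) ((S ^ p) w) := by
      rw [show p + m = m + p by ring, pow_add, ContinuousLinearMap.mul_apply]
    have hw : (S ^ p) w ∈ LinearMap.range (S ^ p).toLinearMap := ⟨w, rfl⟩
    rw [← h] at hw
    obtain ⟨w', hw'⟩ := hw
    refine ⟨w', ?_⟩
    have e4 : (S ^ (p + (m + 1))) w' = (S ^ m) ((S ^ (p + 1)) w') := by
      rw [show p + (m + 1) = m + (p + 1) by ring, pow_add, ContinuousLinearMap.mul_apply]
    simp only [ContinuousLinearMap.coe_coe] at hw' ⊢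
    rw [e4, hw', ← e3]


theorem pow_apply_add (S : X →L[ℂ] X) (a b : ℕ) (z : X) :
    (S ^ (a + b)) z = (S ^ a) ((S ^ b) z) := by
  rw [pow_add, ContinuousLinearMap.mul_apply]

theorem shift_ker (S : X →L[ℂ] X) (r : ℕ) {z : X} (hz : z ∈ LinearMap.ker (S ^ (r + 1)).toLinearMap) :
    S z ∈ LinearMap.ker (S ^ r).toLinearMap := by
  simp only [LinearMap.mem_ker, ContinuousLinearMap.coe_coe] at hz ⊢
  rw [← ContinuousLinearMap.mul_apply, ← pow_succ]
  exact hz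

theorem shift_range (S : X →L[ℂ] X) (r : ℕ) {z : X} (hz : z ∈ LinearMap.range (S ^ r).toLinearMap) :
    S z ∈ LinearMap.range (S ^ (r + 1)).toLinearMap := by
  obtain ⟨w, rfl⟩ := hz
  exact ⟨w, by simp only [ContinuousLinearMap.coe_coe]; rw [pow_succ', ContinuousLinearMap.mul_apply]⟩

theorem ascent (K : X →L[ℂ] X) (hK : IsCompactOperator K) :
    ∃ p, LinearMap.ker ((1 - K : X →L[ℂ] X) ^ (p + 1)).toLinearMap = LinearMap.ker ((1 - K : X →L[ℂ] X) ^ p).toLinearMap := by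
  by_contra hcon
  push_neg at hcon
  set S : X →L[ℂ] X := 1 - K with hSdef
  have hSapp : ∀ z, S z = z - K z := fun z => by
    simp [hSdef, ContinuousLinearMap.sub_apply]
  have hex : ∀ p, ∃ u : X, ‖u‖ ≤ 1 ∧ u ∈ LinearMap.ker (S ^ (p + 1)).toLinearMap ∧
      ∀ z ∈ LinearMap.ker (S ^ p).toLinearMap, 1 / 2 ≤ ‖u - z‖ := by
    intro p
    have hlt : LinearMap.ker (S ^ p).toLinearMap < LinearMap.ker (S ^ (p + 1)).toLinearMap :=
      lt_of_le_of_ne (ker_pow_mono S (by omega)) (Ne.symm (hcon p))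
    obtain ⟨x, hx1, hx2⟩ := SetLike.exists_of_lt hlt
    obtain ⟨u, hu1, ⟨c, hcF⟩, hu3⟩ := riesz_sep (ContinuousLinearMap.isClosed_ker (S ^ p)) hx2
    refine ⟨u, hu1, ?_, hu3⟩
    have hdecomp : u = (u - c • x) + c • x := by abel
    rw [hdecomp]
    exact Submodule.add_mem _ (ker_pow_mono S (by omega) hcF) (Submodule.smul_mem _ _ hx1)
  choose u hu1 hu2 hu3 using hex
  refine sep_contra K hK u hu1 ?_
  intro p q hpq
  rw [norm_sub_rev]
  have hKK : K (u q) - K (u p) = u q - (S (u q) + u p - S (u p)) := by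
    rw [hSapp, hSapp]
    abel
  rw [hKK]
  refine hu3 q _ ?_
  have m1 : S (u q) ∈ LinearMap.ker (S ^ q).toLinearMap := shift_ker S q (hu2 q)
  have m2 : u p ∈ LinearMap.ker (S ^ q).toLinearMap := ker_pow_mono S (by omega) (hu2 p)
  have m3 : S (u p) ∈ LinearMap.ker (S ^ q).toLinearMap :=
    ker_pow_mono S (by omega : p ≤ q) (shift_ker S p (hu2 p))
  exact Submodule.sub_mem _ (Submodule.add_mem _ m1 m2) m3

theorem descent (K : X →L[ℂ] X) (hK : IsCompactOperator K) :
    ∃ p, LinearMap.range ((1 - K : X →L[ℂ] X) ^ (p + 1)).toLinearMap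
      = LinearMap.range ((1 - K : X →L[ℂ] X) ^ p).toLinearMap := by
  by_contra hcon
  push_neg at hcon
  set S : X →L[ℂ] X := 1 - K with hSdef
  have hSapp : ∀ z, S z = z - K z := fun z => by
    simp [hSdef, ContinuousLinearMap.sub_apply]
  have hclosed : ∀ r : ℕ, IsClosed ((LinearMap.range (S ^ r).toLinearMap) : Set X) := by
    intro r
    obtain ⟨C, hC, hCeq⟩ := pow_one_sub K hK r
    rw [hSdef, hCeq] at *
    exact range_closed C hC
  have hex : ∀ p, ∃ u : X, ‖u‖ ≤ 1 ∧ u ∈ LinearMap.range (S ^ p).toLinearMap ∧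
      ∀ z ∈ LinearMap.range (S ^ (p + 1)).toLinearMap, 1 / 2 ≤ ‖u - z‖ := by
    intro p
    have hlt : LinearMap.range (S ^ (p + 1)).toLinearMap < LinearMap.range (S ^ p).toLinearMap :=
      lt_of_le_of_ne (range_pow_anti S (by omega)) (hcon p)
    obtain ⟨x, hx1, hx2⟩ := SetLike.exists_of_lt hlt
    obtain ⟨u, hu1, ⟨c, hcF⟩, hu3⟩ := riesz_sep (hclosed (p + 1)) hx2
    refine ⟨u, hu1, ?_, hu3⟩
    have hdecomp : u = (u - c • x) + c • x := by abel
    rw [hdecomp]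
    exact Submodule.add_mem _ (range_pow_anti S (by omega) hcF) (Submodule.smul_mem _ _ hx1)
  choose u hu1 hu2 hu3 using hex
  refine sep_contra K hK u hu1 ?_
  intro p q hpq
  have hKK : K (u p) - K (u q) = u p - (S (u p) + u q - S (u q)) := by
    rw [hSapp, hSapp]
    abel
  rw [hKK]
  refine hu3 p _ ?_
  have m1 : S (u p) ∈ LinearMap.range (S ^ (p + 1)).toLinearMap := shift_range S p (hu2 p)
  have m2 : u q ∈ LinearMap.range (S ^ (p + 1)).toLinearMap := range_pow_anti S (by omega) (hu2 q)
  have m3 : S (u q) ∈ LinearMap.range (S ^ (p + 1)).toLinearMap :=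
    range_pow_anti S (by omega : p + 1 ≤ q + 1) (shift_range S q (hu2 q))
  exact Submodule.sub_mem _ (Submodule.add_mem _ m1 m2) m3

theorem sup_closed (W R : Submodule ℂ X) [FiniteDimensional ℂ W]
    (hR : IsClosed (R : Set X)) : IsClosed ((W ⊔ R : Submodule ℂ X) : Set X) := by
  haveI : IsClosed (R : Set X) := hR
  have hcont : Continuous R.mkQ := by
    have := (R.toAddSubgroup.normedMk).continuous
    exact this
  haveI : FiniteDimensional ℂ (W.map R.mkQ) := Module.Finite.map W R.mkQ
  have hclosed : IsClosed ((W.map R.mkQ : Submodule ℂ (X ⧸ R)) : Set (X ⧸ R)) :=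
    Submodule.closed_of_finiteDimensional _
  have heq : ((W ⊔ R : Submodule ℂ X) : Set X) = R.mkQ ⁻¹' (W.map R.mkQ) := by
    rw [show W ⊔ R = R ⊔ W from sup_comm W R, ← Submodule.comap_map_mkQ R W]
    rfl
  rw [heq]
  exact hclosed.preimage hcont

end RieszTheory


/-- The algebraic multiplicity of `μ` for a continuous linear endomorphism `T`:
the dimension of the generalized eigenspace `⋃ₖ ker (T - μ·id)^k`. -/
noncomputable def algMult {E : Type*} [NormedAddCommGroup E] [NormedSpace ℂ E]
    (T : E →L[ℂ] E) (μ : ℂ) : Cardinal :=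
  Module.rank ℂ
    ↥(⨆ k : ℕ, LinearMap.ker
      ((((T : E →ₗ[ℂ] E) - μ • LinearMap.id : E →ₗ[ℂ] E) : Module.End ℂ E) ^ k))


theorem generalized_eigenvector_mem_dense_subspace
    {E E' : Type*} [NormedAddCommGroup E] [NormedSpace ℂ E] [CompleteSpace E]
    [NormedAddCommGroup E'] [NormedSpace ℂ E'] [CompleteSpace E']
    (J : E' →L[ℂ] E) (hJinj : Function.Injective J) (hJdense : DenseRange J)
    (A : E →L[ℂ] E) (hA : IsCompactOperator A)
    (A' : E' →L[ℂ] E') (hA' : IsCompactOperator A')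
    (hrestr : A ∘L J = J ∘L A')
    (μ : ℂ) (hμ : μ ≠ 0) (n : ℕ) (x : E)
    (hx : x ∈ LinearMap.ker
      ((((A : E →ₗ[ℂ] E) - μ • LinearMap.id : E →ₗ[ℂ] E) : Module.End ℂ E) ^ n)) :
    x ∈ Set.range J := by
  classical
  set K : E →L[ℂ] E := μ⁻¹ • A with hKdef
  set K' : E' →L[ℂ] E' := μ⁻¹ • A' with hK'def
  have hKc : IsCompactOperator K := by
    have h := hA.smul (μ⁻¹)
    have heq : ⇑K = μ⁻¹ • ⇑A := by funext z; simp [hKdef]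
    rw [heq]; exact h
  have hK'c : IsCompactOperator K' := by
    have h := hA'.smul (μ⁻¹)
    have heq : ⇑K' = μ⁻¹ • ⇑A' := by funext z; simp [hK'def]
    rw [heq]; exact h
  set S : E →L[ℂ] E := 1 - K with hSdef
  set S' : E' →L[ℂ] E' := 1 - K' with hS'def
  -- translate the hypothesis : (S ^ n) x = 0
  have hxS : (S ^ n) x = 0 := by
    have key : ∀ (m : ℕ) (z : E),
        ((((A : E →ₗ[ℂ] E) - μ • LinearMap.id : E →ₗ[ℂ] E) : Module.End ℂ E) ^ m) z
          = (-μ) ^ m • (S ^ m) z := by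
      intro m
      induction m with
      | zero => intro z; simp
      | succ m ih =>
        intro z
        have hSz : ∀ w : E, S w = w - μ⁻¹ • A w := by
          intro w; simp [hSdef, hKdef, ContinuousLinearMap.sub_apply]
        have hlin : ∀ w : E,
            (((A : E →ₗ[ℂ] E) - μ • LinearMap.id : E →ₗ[ℂ] E)) w = A w - μ • w := by
          intro w; simp
        have inner : ∀ w : E, A w - μ • w = (-μ) • S w := by
          intro w
          rw [hSz w, smul_sub, smul_smul, show -μ * μ⁻¹ = -1 by field_simp, neg_smul,
            neg_smul, one_smul, sub_neg_eq_add]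
          abel
        rw [pow_succ' (((A : E →ₗ[ℂ] E) - μ • LinearMap.id : E →ₗ[ℂ] E) : Module.End ℂ E) m,
          Module.End.mul_apply, ih z, map_smul, hlin, inner,
          pow_succ' S m, ContinuousLinearMap.mul_apply, pow_succ' (-μ) m, mul_smul]
        rw [smul_comm]
    have h0 : ((((A : E →ₗ[ℂ] E) - μ • LinearMap.id : E →ₗ[ℂ] E) : Module.End ℂ E) ^ n) x = 0 :=
      hx
    rw [key n x] at h0
    have hne : ((-μ) ^ n : ℂ) ≠ 0 := pow_ne_zero _ (neg_ne_zero.2 hμ)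
    exact (smul_eq_zero.1 h0).resolve_left hne
  -- the intertwining relation
  have hjs : ∀ (y' : E'), J (S' y') = S (J y') := by
    intro y'
    have hAJ : A (J y') = J (A' y') := by
      have h := ContinuousLinearMap.ext_iff.1 hrestr y'
      simpa using h
    simp [hS'def, hK'def, hSdef, hKdef, ContinuousLinearMap.sub_apply, map_sub, map_smul, hAJ]
  have hjsm : ∀ (m : ℕ) (y' : E'), J ((S' ^ m) y') = (S ^ m) (J y') := by
    intro m
    induction m with
    | zero => intro y'; simp
    | succ m ih =>
      intro y'
      rw [pow_succ' S' m, ContinuousLinearMap.mul_apply, pow_succ' S m,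
        ContinuousLinearMap.mul_apply, ← ih, hjs (((S' ^ m)) y')]
  -- stabilization indices
  obtain ⟨p₁, hp₁⟩ := ascent K hKc
  obtain ⟨p₂, hp₂⟩ := descent K' hK'c
  have hkerstab : ∀ m, m ≥ p₁ → LinearMap.ker (S ^ m).toLinearMap = LinearMap.ker (S ^ p₁).toLinearMap := by
    intro m hm
    obtain ⟨t, rfl⟩ := Nat.exists_eq_add_of_le hm
    exact ker_pow_stab S p₁ hp₁ t
  have hrangestab : ∀ m, m ≥ p₂ → LinearMap.range (S' ^ m).toLinearMap = LinearMap.range (S' ^ p₂).toLinearMap := by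
    intro m hm
    obtain ⟨t, rfl⟩ := Nat.exists_eq_add_of_le hm
    exact range_pow_stab S' p₂ hp₂ t
  set p := p₁ + p₂ + n + 1 with hpdef
  have hker2p : LinearMap.ker (S ^ (p + p)).toLinearMap = LinearMap.ker (S ^ p).toLinearMap := by
    rw [hkerstab (p + p) (by omega), hkerstab p (by omega)]
  have hrange2p : LinearMap.range (S' ^ (p + p)).toLinearMap = LinearMap.range (S' ^ p).toLinearMap := by
    rw [hrangestab (p + p) (by omega), hrangestab p (by omega)]
  -- the submodules
  set N' : Submodule ℂ E' := LinearMap.ker (S' ^ p).toLinearMap with hN'def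
  set R : Submodule ℂ E := LinearMap.range (S ^ p).toLinearMap with hRdef
  have hN'fd : FiniteDimensional ℂ N' := by
    obtain ⟨C, hC, hCeq⟩ := pow_one_sub K' hK'c p
    rw [hN'def, hS'def, hCeq]
    exact ker_findim C hC
  have hRclosed : IsClosed (R : Set E) := by
    obtain ⟨C, hC, hCeq⟩ := pow_one_sub K hKc p
    rw [hRdef, hSdef, hCeq]
    exact range_closed C hC
  set W : Submodule ℂ E := N'.map (J : E' →ₗ[ℂ] E) with hWdef
  haveI : FiniteDimensional ℂ W := Module.Finite.map N' (J : E' →ₗ[ℂ] E)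
  set M : Submodule ℂ E := W ⊔ R with hMdef
  have hMclosed : IsClosed (M : Set E) := sup_closed W R hRclosed
  -- range J ⊆ M
  have hJM : Set.range J ⊆ (M : Set E) := by
    rintro _ ⟨e', rfl⟩
    have hmem : (S' ^ p) e' ∈ LinearMap.range (S' ^ (p + p)).toLinearMap := by
      rw [hrange2p]
      exact ⟨e', rfl⟩
    obtain ⟨w, hw⟩ := hmem
    have hkermem : e' - (S' ^ p) w ∈ N' := by
      rw [hN'def, LinearMap.mem_ker, map_sub]
      simp only [ContinuousLinearMap.coe_coe] at hw ⊢
      rw [show (S' ^ p) ((S' ^ p) w) = (S' ^ (p + p)) w from (pow_apply_add S' p p w).symm]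
      rw [hw, sub_self]
    have hdecomp : J e' = J (e' - (S' ^ p) w) + (S ^ p) (J w) := by
      rw [← hjsm p w, ← map_add]
      congr 1
      abel
    rw [hdecomp]
    exact Submodule.add_mem _
      (Submodule.mem_sup_left (Submodule.mem_map_of_mem hkermem))
      (Submodule.mem_sup_right ⟨J w, rfl⟩)
  -- M = ⊤ by density
  have hMtop : ∀ z : E, z ∈ M := by
    intro z
    have hz : z ∈ closure (Set.range J) := hJdense z
    have hsub : closure (Set.range J) ⊆ closure (M : Set E) := closure_mono hJM
    rw [hMclosed.closure_eq] at hsub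
    exact hsub hz
  -- decompose x
  obtain ⟨w, hwW, r, hrR, hsum⟩ := Submodule.mem_sup.1 (hMtop x)
  obtain ⟨a, haN', rfl⟩ := hwW
  have hxN : (S ^ p) x = 0 := by
    have h1 : x ∈ LinearMap.ker (S ^ n).toLinearMap := LinearMap.mem_ker.2 hxS
    exact ker_pow_mono S (by omega : n ≤ p) h1
  have hSr : (S ^ p) r = 0 := by
    have h1 : r = x - J a := eq_sub_of_add_eq' hsum
    rw [h1, map_sub, hxN, ← hjsm p a]
    have h2 : (S' ^ p) a = 0 := haN'
    rw [h2, map_zero, sub_zero]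
  -- r ∈ ker ∩ range, hence r = 0
  obtain ⟨u, hu⟩ := hrR
  simp only [ContinuousLinearMap.coe_coe] at hu
  have hu2 : u ∈ LinearMap.ker (S ^ (p + p)).toLinearMap := by
    rw [LinearMap.mem_ker, ContinuousLinearMap.coe_coe, pow_apply_add S p p u, hu]
    exact hSr
  rw [hker2p] at hu2
  have hr0 : r = 0 := by
    rw [← hu]
    exact hu2
  rw [hr0, add_zero] at hsum
  exact ⟨a, hsum⟩
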